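/- Let c ≥ 1, b ≥ 1/2, 0 < x < 1, and let γ > 0 satisfy γ ≤ x / (4·b·c·log₂(12b/x)). Then h(1/2 − γ) ≥ 1 − x + b·h(c·γ). -/

import Mathlib

/-- The binary entropy function `h(p) = −p·log₂ p − (1−p)·log₂(1−p)`
(with `h(0) = h(1) = 0`, automatic for `Real.logb`). -/
noncomputable def h2 (p : ℝ) : ℝ :=
  -p * Real.logb 2 p - (1 - p) * Real.logb 2 (1 - p)

open Real

lemma h2_eq (p : ℝ) : h2 p = (-(p * Real.log p) - (1-p) * Real.log (1-p)) / Real.log 2 := by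
  simp only [h2, Real.logb]; ring

lemma log2_pos : (0:ℝ) < Real.log 2 := Real.log_pos (by norm_num)

lemma log2_le_one : Real.log 2 ≤ 1 := by
  have := Real.log_le_sub_one_of_pos (show (0:ℝ) < 2 by norm_num); linarith

/-- Step 1: `h(1/2−γ) ≥ 1 − 2γ` for `0 < γ ≤ 1/4`. -/
lemma step1 {γ : ℝ} (h0 : 0 < γ) (h1 : γ ≤ 1/4) : h2 (1/2 - γ) ≥ 1 - 2*γ := by
  have hp : (0:ℝ) < 1/2 - γ := by linarith
  have hq : (0:ℝ) < 1/2 + γ := by linarith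
  have e1 : Real.log (2*(1/2-γ)) = Real.log 2 + Real.log (1/2-γ) :=
    Real.log_mul two_ne_zero (ne_of_gt hp)
  have e2 : Real.log (2*(1/2+γ)) = Real.log 2 + Real.log (1/2+γ) :=
    Real.log_mul two_ne_zero (ne_of_gt hq)
  have b1 : Real.log (2*(1/2-γ)) ≤ 2*(1/2-γ) - 1 :=
    Real.log_le_sub_one_of_pos (by linarith)
  have b2 : Real.log (2*(1/2+γ)) ≤ 2*(1/2+γ) - 1 :=
    Real.log_le_sub_one_of_pos (by linarith)
  have hl : (0.6931:ℝ) < Real.log 2 := by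
    have := Real.log_two_gt_d9; linarith
  rw [h2_eq, ge_iff_le, le_div_iff₀ log2_pos]
  have hrw : (1:ℝ) - (1/2 - γ) = 1/2 + γ := by ring
  rw [hrw]
  nlinarith [mul_le_mul_of_nonneg_left b1 hp.le, mul_le_mul_of_nonneg_left b2 hq.le,
    mul_le_mul_of_nonneg_left h1 h0.le, sq_nonneg γ]

/-- Step 2: `h(u) ≤ u(1 − ln u)/ln 2` for `0 < u < 1`. -/
lemma step2 {u : ℝ} (h0 : 0 < u) (h1 : u < 1) :
    h2 u ≤ (u * (1 - Real.log u)) / Real.log 2 := by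
  have h1u : (0:ℝ) < 1 - u := by linarith
  have hinv : Real.log (1-u)⁻¹ ≤ (1-u)⁻¹ - 1 :=
    Real.log_le_sub_one_of_pos (by positivity)
  rw [Real.log_inv] at hinv
  -- -(1-u) * log (1-u) ≤ u
  have key : -((1-u) * Real.log (1-u)) ≤ u := by
    have h2' := mul_le_mul_of_nonneg_left hinv h1u.le
    have : (1-u) * (1-u)⁻¹ = 1 := mul_inv_cancel₀ (ne_of_gt h1u)
    nlinarith
  rw [h2_eq, div_le_div_iff_of_pos_right log2_pos]
  linarith

/-- `s·(−ln s) ≤ 1/2` for `0 < s ≤ 1`. -/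
lemma slog {s : ℝ} (h0 : 0 < s) (h1 : s ≤ 1) : s * (-Real.log s) ≤ 1/2 := by
  have h2 : Real.log ((2*s)⁻¹) ≤ (2*s)⁻¹ - 1 :=
    Real.log_le_sub_one_of_pos (by positivity)
  rw [Real.log_inv, Real.log_mul two_ne_zero (ne_of_gt h0)] at h2
  have hneg : -Real.log s ≤ (2*s)⁻¹ := by
    have := log2_le_one; linarith
  calc s * (-Real.log s) ≤ s * (2*s)⁻¹ := mul_le_mul_of_nonneg_left hneg h0.le
    _ = 1/2 := by field_simp

/-- Step 3: `u·(−ln u) ≤ A·(−ln A) + A/2` for `0 < u ≤ A ≤ 1`. -/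
lemma step3 {u A : ℝ} (hu : 0 < u) (huA : u ≤ A) (hA1 : A ≤ 1) :
    u * (-Real.log u) ≤ A * (-Real.log A) + A/2 := by
  have hA : 0 < A := lt_of_lt_of_le hu huA
  have hs0 : 0 < u/A := div_pos hu hA
  have hs1 : u/A ≤ 1 := (div_le_one hA).mpr huA
  have h1 := slog hs0 hs1
  have e : Real.log u = Real.log A + Real.log (u/A) := by
    rw [Real.log_div (ne_of_gt hu) (ne_of_gt hA)]; ring
  have hlogA : 0 ≤ -Real.log A := by
    have : Real.log A ≤ 0 := Real.log_nonpos hA.le hA1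
    linarith
  have h2 : u * (-Real.log A) ≤ A * (-Real.log A) :=
    mul_le_mul_of_nonneg_right huA hlogA
  have h3 : u * (-Real.log (u/A)) ≤ A / 2 := by
    have h4 := mul_le_mul_of_nonneg_left h1 hA.le
    calc u * (-Real.log (u/A)) = A * ((u/A) * (-Real.log (u/A))) := by field_simp
      _ ≤ A * (1/2) := h4
      _ = A/2 := by ring
  calc u * (-Real.log u) = u * (-Real.log A) + u * (-Real.log (u/A)) := by rw [e]; ring
    _ ≤ A * (-Real.log A) + A/2 := by linarith

set_option maxHeartbeats 2000000 in
/-- Let `c ≥ 1`, `b ≥ 1/2`, `0 < x < 1`, and let `γ > 0` satisfy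
`γ ≤ x / (4·b·c·log₂(12b/x))`. Then `h(1/2 − γ) ≥ 1 − x + b·h(c·γ)`. -/
theorem stmt_8 (c b x γ : ℝ) (hc : 1 ≤ c) (hb : 1/2 ≤ b)
    (hx0 : 0 < x) (hx1 : x < 1) (hγ0 : 0 < γ)
    (hγ : γ ≤ x / (4 * b * c * Real.logb 2 (12 * b / x))) :
    h2 (1/2 - γ) ≥ 1 - x + b * h2 (c * γ) := by
  have hb0 : (0:ℝ) < b := by linarith
  have hc0 : (0:ℝ) < c := by linarith
  have hℓ0 : (0:ℝ) < Real.log 2 := log2_pos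
  have hl : (0.6931:ℝ) < Real.log 2 := by have := Real.log_two_gt_d9; linarith
  have hl' : Real.log 2 < 0.6932 := by have := Real.log_two_lt_d9; linarith
  obtain ⟨t, htdef⟩ : ∃ y : ℝ, y = 12 * b / x := ⟨_, rfl⟩
  rw [← htdef] at hγ
  have ht6 : (6:ℝ) ≤ t := by
    rw [htdef, le_div_iff₀ hx0]; nlinarith
  have ht0 : (0:ℝ) < t := by linarith
  simp only [Real.logb] at hγ
  obtain ⟨T, hTdef⟩ : ∃ y : ℝ, y = Real.log t := ⟨_, rfl⟩
  rw [← hTdef] at hγ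
  -- numeric log facts
  have h32 : (1:ℝ)/3 ≤ Real.log (3/2) := by
    have h := Real.log_le_sub_one_of_pos (show (0:ℝ) < 2/3 by norm_num)
    have e : Real.log ((3:ℝ)/2) = - Real.log (2/3) := by
      rw [show ((3:ℝ)/2) = ((2:ℝ)/3)⁻¹ by norm_num, Real.log_inv]
    rw [e]; linarith
  have h3 : Real.log 3 = Real.log 2 + Real.log (3/2) := by
    rw [← Real.log_mul two_ne_zero (by norm_num)]; norm_num
  have hlog3 : Real.log 2 + 1/3 ≤ Real.log 3 := by linarith
  have h6 : Real.log 6 = Real.log 2 + Real.log 3 := by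
    rw [← Real.log_mul two_ne_zero (by norm_num)]; norm_num
  have hT6 : Real.log 6 ≤ T := by
    rw [hTdef]; exact Real.log_le_log (by norm_num) ht6
  have hT2 : 2 * Real.log 2 + 1/3 ≤ T := by linarith
  have hT0 : (0:ℝ) < T := by linarith
  have hL2 : (2:ℝ) ≤ T / Real.log 2 := by rw [le_div_iff₀ hℓ0]; linarith
  have hbc : (1:ℝ)/2 ≤ b * c := by nlinarith
  have hbc1 : (1:ℝ) ≤ b * c * (T / Real.log 2) := by
    nlinarith [mul_le_mul hbc hL2 (by norm_num) (by linarith : (0:ℝ) ≤ b*c)]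
  have hD : (0:ℝ) < 4 * b * c * (T / Real.log 2) := by
    have := div_pos hT0 hℓ0; nlinarith
  -- γ ≤ 1/4
  have hγ14 : γ ≤ 1/4 := by
    have h44 : (4:ℝ) ≤ 4 * b * c * (T / Real.log 2) := by nlinarith
    have hx4 : x / (4 * b * c * (T / Real.log 2)) ≤ x / 4 :=
      div_le_div_of_nonneg_left hx0.le (by norm_num) h44
    linarith
  obtain ⟨A, hAdef⟩ : ∃ y : ℝ, y = x * Real.log 2 / (4 * b * T) := ⟨_, rfl⟩
  have h4bT : (0:ℝ) < 4 * b * T := by nlinarith [mul_pos hb0 hT0]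
  have hA0 : (0:ℝ) < A := by
    rw [hAdef]; exact div_pos (mul_pos hx0 hℓ0) h4bT
  have huA : c * γ ≤ A := by
    have e : c * (x / (4 * b * c * (T / Real.log 2))) = A := by
      rw [hAdef]; field_simp [hb0.ne', hc0.ne', hT0.ne', hℓ0.ne', hx0.ne']
    calc c * γ ≤ c * (x / (4 * b * c * (T / Real.log 2))) :=
          mul_le_mul_of_nonneg_left hγ hc0.le
      _ = A := e
  have hu0 : (0:ℝ) < c * γ := mul_pos hc0 hγ0
  have hA14 : A ≤ 1/4 := by
    rw [hAdef, div_le_iff₀ h4bT]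
    nlinarith [mul_le_mul_of_nonneg_right hx1.le hℓ0.le,
      mul_le_mul_of_nonneg_right hb hT0.le]
  have hA1 : A ≤ 1 := by linarith
  have hu1 : c * γ < 1 := by linarith
  -- entropy bounds
  have hH1 : h2 (1/2 - γ) ≥ 1 - 2*γ := step1 hγ0 hγ14
  have hStep2 := step2 hu0 hu1
  have hStep3 := step3 hu0 huA hA1
  have hnum : (c*γ) * (1 - Real.log (c*γ)) ≤ A * (-Real.log A) + 3/2 * A := by
    have expand : (c*γ) * (1 - Real.log (c*γ)) = c*γ + (c*γ) * (-Real.log (c*γ)) := by ring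
    linarith
  have hh2u : h2 (c*γ) ≤ (A * (-Real.log A) + 3/2 * A) / Real.log 2 :=
    le_trans hStep2 ((div_le_div_iff_of_pos_right hℓ0).mpr hnum)
  have hbh2u : b * h2 (c*γ) ≤ x / (4*T) * (-Real.log A + 3/2) := by
    have h1' : b * h2 (c*γ) ≤ b * ((A * (-Real.log A) + 3/2 * A) / Real.log 2) :=
      mul_le_mul_of_nonneg_left hh2u hb0.le
    have e : b * ((A * (-Real.log A) + 3/2 * A) / Real.log 2)
        = x / (4*T) * (-Real.log A + 3/2) := by
      rw [hAdef]; field_simp [hb0.ne', hc0.ne', hT0.ne', hℓ0.ne', hx0.ne']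
    linarith [e ▸ h1']
  -- formula for -log A
  have hlogA : -Real.log A = T - Real.log 3 + Real.log T - Real.log (Real.log 2) := by
    have hAinv : A⁻¹ = (t/3) * (T / Real.log 2) := by
      rw [hAdef, htdef]; field_simp [hb0.ne', hc0.ne', hT0.ne', hℓ0.ne', hx0.ne']; ring
    have e1 : -Real.log A = Real.log A⁻¹ := (Real.log_inv A).symm
    rw [e1, hAinv, Real.log_mul (by positivity) (by positivity),
      Real.log_div (ne_of_gt ht0) (by norm_num),
      Real.log_div (ne_of_gt hT0) (ne_of_gt hℓ0), ← hTdef]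
    ring
  -- numeric core inequality
  have hnumeric : 4 * Real.log 2
      + (T - Real.log 3 + Real.log T - Real.log (Real.log 2) + 3/2) ≤ 4 * T := by
    have hlogT : Real.log T ≤ T - 1 := Real.log_le_sub_one_of_pos hT0
    have hlogℓ : -Real.log (Real.log 2) ≤ 1/(Real.log 2) - 1 := by
      have h := Real.log_le_sub_one_of_pos (show (0:ℝ) < (Real.log 2)⁻¹ by positivity)
      rw [Real.log_inv] at h
      rw [one_div]; linarith
    have hinvℓ : 1/(Real.log 2) ≤ Real.log 2 + 3/2 := by
      rw [div_le_iff₀ hℓ0]; nlinarith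
    linarith
  -- 2γ ≤ x log2 / T
  have hγ2T : 2 * γ ≤ x * Real.log 2 / T := by
    have e2 : x / (4 * b * c * (T / Real.log 2)) = x * Real.log 2 / (4 * (b*c) * T) := by
      field_simp [hb0.ne', hc0.ne', hT0.ne', hℓ0.ne', hx0.ne']
    have h2T : (0:ℝ) < 2 * T := by linarith
    have h5 : 2 * T ≤ 4 * (b*c) * T := by nlinarith
    have h6' : x * Real.log 2 / (4 * (b*c) * T) ≤ x * Real.log 2 / (2 * T) :=
      div_le_div_of_nonneg_left (by positivity) h2T h5
    have e3 : x * Real.log 2 / (2 * T) = (x * Real.log 2 / T) / 2 := by ring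
    have := hγ
    rw [e2] at this
    rw [e3] at h6'
    linarith
  -- final combination
  have hfinal : x * Real.log 2 / T
      + x / (4*T) * (T - Real.log 3 + Real.log T - Real.log (Real.log 2) + 3/2) ≤ x := by
    have e4 : x * Real.log 2 / T
        + x / (4*T) * (T - Real.log 3 + Real.log T - Real.log (Real.log 2) + 3/2)
        = x / (4*T) * (4 * Real.log 2
          + (T - Real.log 3 + Real.log T - Real.log (Real.log 2) + 3/2)) := by
      field_simp
    rw [e4]
    have hx4T : (0:ℝ) ≤ x / (4*T) := div_nonneg hx0.le (by linarith)
    have h5 := mul_le_mul_of_nonneg_left hnumeric hx4T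
    have e5 : x / (4*T) * (4*T) = x := by field_simp
    linarith
  have hkey : 2*γ + b * h2 (c*γ) ≤ x := by
    rw [hlogA] at hbh2u
    linarith
  linarith
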